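/- Let $b>0$, $L-R>0$, $p\neq 0$ with $p^4<\frac{8(L-R)^3}{27b}$. Then the cubic $\frac{b}{2}h^3-(L-R)h+p^2=0$ has exactly three real roots: one negative root and two positive roots. -/
import Mathlib


/-- under the strict discriminant condition, the depth-recovery
cubic has exactly three real roots: one negative and two positive. -/
theorem cubic_three_roots
    (b R L p : ℝ) (hb : 0 < b) (hLR : 0 < L - R) (hp : p ≠ 0)
    (hdisc : p ^ 4 < 8 * (L - R) ^ 3 / (27 * b)) :
    ∃ h₁ h₂ h₃ : ℝ, h₁ < 0 ∧ 0 < h₂ ∧ 0 < h₃ ∧ h₂ ≠ h₃ ∧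
      ∀ h : ℝ, b / 2 * h ^ 3 - (L - R) * h + p ^ 2 = 0 ↔
        (h = h₁ ∨ h = h₂ ∨ h = h₃) := by
  set f : ℝ → ℝ := fun h => b / 2 * h ^ 3 - (L - R) * h + p ^ 2 with hf
  have hcont : Continuous f := by fun_prop
  have hp2 : 0 < p ^ 2 := by positivity
  obtain ⟨q, hqdef⟩ : ∃ q : ℝ, q = Real.sqrt (2 * (L - R) / (3 * b)) := ⟨_, rfl⟩
  have hq2 : q ^ 2 = 2 * (L - R) / (3 * b) := by
    rw [hqdef]; exact Real.sq_sqrt (by positivity)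
  have hqpos : 0 < q := by
    rw [hqdef]; exact Real.sqrt_pos.mpr (by positivity)
  have htpos : 0 < 2 / 3 * (L - R) * q := by positivity
  have ht2 : (2 / 3 * (L - R) * q) ^ 2 = 8 * (L - R) ^ 3 / (27 * b) := by
    have hb0 : (b:ℝ) ≠ 0 := ne_of_gt hb
    have expand : (2 / 3 * (L - R) * q) ^ 2 = 4 / 9 * (L - R) ^ 2 * q ^ 2 := by ring
    rw [expand, hq2]
    field_simp
    ring
  have hkey : p ^ 2 < 2 / 3 * (L - R) * q := by
    have hsq : (p ^ 2) ^ 2 < (2 / 3 * (L - R) * q) ^ 2 := by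
      rw [ht2]
      calc (p ^ 2) ^ 2 = p ^ 4 := by ring
      _ < _ := hdisc
    exact lt_of_pow_lt_pow_left₀ 2 htpos.le hsq
  have hq2' : 3 * b * q ^ 2 = 2 * (L - R) := by
    rw [hq2]; field_simp
  have hfq : f q < 0 := by
    show b / 2 * q ^ 3 - (L - R) * q + p ^ 2 < 0
    have hcube : b / 2 * q ^ 3 = (L - R) / 3 * q := by
      linear_combination (q / 6) * hq2'
    linarith [hkey, hcube]
  have hf0 : 0 < f 0 := by simpa [hf] using hp2
  obtain ⟨c, hcdef⟩ : ∃ c : ℝ, c = 1 + 2 * ((L - R) + p ^ 2) / b := ⟨_, rfl⟩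
  have hcc : 0 ≤ 2 * ((L - R) + p ^ 2) / b := by positivity
  have hc1 : 1 ≤ c := by rw [hcdef]; linarith
  have hbc : b * c / 2 = b / 2 + (L - R) + p ^ 2 := by
    rw [hcdef]; field_simp; ring
  have hc0 : 0 < c := lt_of_lt_of_le one_pos hc1
  have hcsq : c ≤ c ^ 2 := by
    have h := mul_nonneg hc0.le (by linarith : (0:ℝ) ≤ c - 1)
    have hid : c ^ 2 - c = c * (c - 1) := by ring
    linarith [h, hid]
  have hfneg : f (-c) < 0 := by
    show b / 2 * (-c) ^ 3 - (L - R) * (-c) + p ^ 2 < 0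
    have key : b / 2 * c ^ 3 = (b / 2 + (L - R) + p ^ 2) * c ^ 2 := by
      have : b / 2 * c ^ 3 = (b * c / 2) * c ^ 2 := by ring
      rw [this, hbc]
    have hc2 : 1 ≤ c ^ 2 := le_trans hc1 hcsq
    have t1 : (L - R) * c ≤ (L - R) * c ^ 2 := mul_le_mul_of_nonneg_left hcsq hLR.le
    have t2 : p ^ 2 ≤ p ^ 2 * c ^ 2 := le_mul_of_one_le_right hp2.le hc2
    have t3 : (0:ℝ) < b / 2 * c ^ 2 := by positivity
    have expand : b / 2 * (-c) ^ 3 - (L - R) * (-c) + p ^ 2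
        = -(b / 2 * c ^ 3) + (L - R) * c + p ^ 2 := by ring
    have key' : b / 2 * c ^ 3 = b / 2 * c ^ 2 + (L - R) * c ^ 2 + p ^ 2 * c ^ 2 := by
      linear_combination key
    rw [expand]
    linarith [key', t1, t2, t3]
  obtain ⟨M, hMdef⟩ : ∃ M : ℝ, M = q + c := ⟨_, rfl⟩
  have hM1 : 1 ≤ M := by rw [hMdef]; linarith
  have hMc : c ≤ M := by rw [hMdef]; linarith
  have hM0 : 0 < M := lt_of_lt_of_le one_pos hM1
  have hfM : 0 < f M := by
    show 0 < b / 2 * M ^ 3 - (L - R) * M + p ^ 2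
    have key : (b * c / 2) * M ^ 2 ≤ b / 2 * M ^ 3 := by
      have h0 : (0:ℝ) ≤ (b / 2) * ((M - c) * M ^ 2) :=
        mul_nonneg (by positivity) (mul_nonneg (by linarith) (sq_nonneg M))
      have hid : b / 2 * M ^ 3 - (b * c / 2) * M ^ 2 = (b / 2) * ((M - c) * M ^ 2) := by ring
      linarith [h0, hid]
    rw [hbc] at key
    have key' : b / 2 * M ^ 2 + (L - R) * M ^ 2 + p ^ 2 * M ^ 2 ≤ b / 2 * M ^ 3 := by
      have hid : (b / 2 + (L - R) + p ^ 2) * M ^ 2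
          = b / 2 * M ^ 2 + (L - R) * M ^ 2 + p ^ 2 * M ^ 2 := by ring
      linarith [key, hid]
    have hM2 : M ≤ M ^ 2 := by
      have h := mul_nonneg hM0.le (by linarith : (0:ℝ) ≤ M - 1)
      have hid : M ^ 2 - M = M * (M - 1) := by ring
      linarith [h, hid]
    have t1 : (L - R) * M ≤ (L - R) * M ^ 2 := mul_le_mul_of_nonneg_left hM2 hLR.le
    have t2 : (0:ℝ) < b / 2 * M ^ 2 := by positivity
    have t3 : (0:ℝ) ≤ p ^ 2 * M ^ 2 := by positivity
    linarith [key', t1, t2, t3]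
  -- negative root
  obtain ⟨h₁, hmem1, hr1⟩ : ∃ x ∈ Set.Icc (-c) 0, f x = 0 := by
    have := intermediate_value_Icc (by linarith : (-c : ℝ) ≤ 0) hcont.continuousOn
    obtain ⟨x, hx, hfx⟩ := this ⟨le_of_lt hfneg, le_of_lt hf0⟩
    exact ⟨x, hx, hfx⟩
  -- root in (0, q)
  obtain ⟨h₂, hmem2, hr2⟩ : ∃ x ∈ Set.Icc 0 q, f x = 0 := by
    have := intermediate_value_Icc' (le_of_lt hqpos) hcont.continuousOn
    obtain ⟨x, hx, hfx⟩ := this ⟨le_of_lt hfq, le_of_lt hf0⟩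
    exact ⟨x, hx, hfx⟩
  -- root in (q, M)
  obtain ⟨h₃, hmem3, hr3⟩ : ∃ x ∈ Set.Icc q M, f x = 0 := by
    have := intermediate_value_Icc (by linarith : q ≤ M) hcont.continuousOn
    obtain ⟨x, hx, hfx⟩ := this ⟨le_of_lt hfq, le_of_lt hfM⟩
    exact ⟨x, hx, hfx⟩
  have h1neg : h₁ < 0 := lt_of_le_of_ne hmem1.2 (by rintro rfl; exact absurd hr1 hf0.ne')
  have h2pos : 0 < h₂ := lt_of_le_of_ne hmem2.1 (by rintro rfl; exact absurd hr2 hf0.ne')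
  have h2q : h₂ < q := lt_of_le_of_ne hmem2.2 (by rintro rfl; exact absurd hr2 hfq.ne)
  have hq3 : q < h₃ := lt_of_le_of_ne hmem3.1 (by rintro rfl; exact absurd hr3 hfq.ne)
  have h3pos : 0 < h₃ := lt_trans hqpos hq3
  have h23 : h₂ < h₃ := lt_trans h2q hq3
  have h12 : h₁ < h₂ := lt_trans h1neg h2pos
  have h13 : h₁ < h₃ := lt_trans h12 h23
  have e1 : b / 2 * h₁ ^ 3 - (L - R) * h₁ + p ^ 2 = 0 := hr1
  have e2 : b / 2 * h₂ ^ 3 - (L - R) * h₂ + p ^ 2 = 0 := hr2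
  have e3 : b / 2 * h₃ ^ 3 - (L - R) * h₃ + p ^ 2 = 0 := hr3
  -- Vieta:
  have P12 : b / 2 * (h₁ ^ 2 + h₁ * h₂ + h₂ ^ 2) = L - R := by
    have hne : h₁ - h₂ ≠ 0 := sub_ne_zero.mpr (ne_of_lt h12)
    have key : (h₁ - h₂) * (b / 2 * (h₁ ^ 2 + h₁ * h₂ + h₂ ^ 2) - (L - R)) = 0 := by
      linear_combination e1 - e2
    rcases mul_eq_zero.mp key with h | h
    · exact absurd h hne
    · linarith
  have P23 : b / 2 * (h₂ ^ 2 + h₂ * h₃ + h₃ ^ 2) = L - R := by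
    have hne : h₂ - h₃ ≠ 0 := sub_ne_zero.mpr (ne_of_lt h23)
    have key : (h₂ - h₃) * (b / 2 * (h₂ ^ 2 + h₂ * h₃ + h₃ ^ 2) - (L - R)) = 0 := by
      linear_combination e2 - e3
    rcases mul_eq_zero.mp key with h | h
    · exact absurd h hne
    · linarith
  have S : h₁ + h₂ + h₃ = 0 := by
    have hne : h₁ - h₃ ≠ 0 := sub_ne_zero.mpr (ne_of_lt h13)
    have hb2 : b / 2 ≠ 0 := by positivity
    have key : (b / 2) * ((h₁ - h₃) * (h₁ + h₂ + h₃)) = 0 := by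
      linear_combination P12 - P23
    rcases mul_eq_zero.mp key with h | h
    · exact absurd h hb2
    · rcases mul_eq_zero.mp h with h' | h'
      · exact absurd h' hne
      · exact h'
  have Q : b / 2 * (h₁ * h₂ + h₁ * h₃ + h₂ * h₃) = -(L - R) := by
    linear_combination -P12 + (b / 2 * (h₁ + h₂)) * S
  have C : b / 2 * (h₁ * h₂ * h₃) = -(p ^ 2) := by
    linear_combination e1 + h₁ * Q - (b / 2 * h₁ ^ 2) * S
  refine ⟨h₁, h₂, h₃, h1neg, h2pos, h3pos, ne_of_lt h23, fun h => ?_⟩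
  constructor
  · intro hroot
    have hb2 : b / 2 ≠ 0 := by positivity
    have hfac : (b / 2) * ((h - h₁) * ((h - h₂) * (h - h₃))) = 0 := by
      linear_combination hroot - (b / 2 * h ^ 2) * S + h * Q - C
    rcases mul_eq_zero.mp hfac with hz | hrest
    · exact absurd hz hb2
    · rcases mul_eq_zero.mp hrest with h' | h''
      · exact Or.inl (sub_eq_zero.mp h')
      · rcases mul_eq_zero.mp h'' with h' | h'
        · exact Or.inr (Or.inl (sub_eq_zero.mp h'))
        · exact Or.inr (Or.inr (sub_eq_zero.mp h'))
  · rintro (rfl | rfl | rfl)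
    · exact e1
    · exact e2
    · exact e3
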